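/- Let $\nu$ be a doubling weight, $\alpha\in\mathbb{R}$, and $b\in L^1_{loc}$ satisfying: (a) $\lim_{r\to0}\sup_{\ell(Q)\le r}\mathcal{O}_\nu^\alpha(b;Q)=0$; (b) $\lim_{r\to\infty}\sup_{\ell(Q)\ge r}\mathcal{O}_\nu^\alpha(b;Q)=0$; (c) $\sup_Q\lim_{|x|\to\infty}\mathcal{O}_\nu^\alpha(b;Q+x)=0$. Then the a priori stronger uniform condition $\lim_{r\to\infty}\sup_{Q:\,\mathrm{dist}(Q,0)>r}\mathcal{O}_\nu^\alpha(b;Q)=0$ also holds. -/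

import Mathlib

open MeasureTheory

noncomputable def Cube (d : ℕ) (c : Fin d → ℝ) (l : ℝ) : Set (Fin d → ℝ) :=
  Set.univ.pi fun i => Set.Icc (c i) (c i + l)

noncomputable def avgC (d : ℕ) (b : (Fin d → ℝ) → ℂ) (Q : Set (Fin d → ℝ)) : ℂ :=
  (volume Q).toReal⁻¹ • ∫ x in Q, b x

/-- `𝒪_ν^α(b;Q) = ν(Q)^{-α/d} (1/ν(Q)) ∫_Q |b - ⟨b⟩_Q|`. -/
noncomputable def oscR (d : ℕ) (ν : (Fin d → ℝ) → ℝ) (b : (Fin d → ℝ) → ℂ)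
    (α : ℝ) (Q : Set (Fin d → ℝ)) : ℝ :=
  ((∫ x in Q, ν x) ^ (-(α / (d : ℝ)))) *
    ((∫ x in Q, ‖b x - avgC d b Q‖) / (∫ x in Q, ν x))

lemma cube_isCompact (d : ℕ) (c : Fin d → ℝ) (l : ℝ) : IsCompact (Cube d c l) :=
  isCompact_univ_pi fun _ => isCompact_Icc

lemma cube_volume (d : ℕ) (c : Fin d → ℝ) {l : ℝ} (hl : 0 ≤ l) :
    volume (Cube d c l) = ENNReal.ofReal l ^ d := by
  rw [Cube, volume_pi_pi]
  simp [Real.volume_Icc]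

lemma mem_cube_self (d : ℕ) (c : Fin d → ℝ) {l : ℝ} (hl : 0 ≤ l) : c ∈ Cube d c l := by
  intro i _
  exact ⟨le_refl _, by linarith⟩

lemma cube_subset_cube (d : ℕ) (c : Fin d → ℝ) {l l' : ℝ} (h : l ≤ l') :
    Cube d c l ⊆ Cube d c l' := by
  intro x hx i hi
  obtain ⟨h1, h2⟩ := hx i hi
  exact ⟨h1, by linarith⟩

lemma cube_subset_double (d : ℕ) (c : Fin d → ℝ) {l l' : ℝ} (hl : 0 ≤ l) (h : l' ≤ 3 * l / 2) :
    Cube d c l' ⊆ Cube d (fun i => c i - l / 2) (2 * l) := by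
  intro x hx i hi
  obtain ⟨h1, h2⟩ := hx i hi
  constructor <;> simp only [] <;> linarith

lemma nu_int_pos (d : ℕ) (ν : (Fin d → ℝ) → ℝ) (hνpos : ∀ x, 0 < ν x)
    (hνloc : LocallyIntegrable ν volume) (c : Fin d → ℝ) {l : ℝ} (hl : 0 < l) :
    0 < ∫ x in Cube d c l, ν x := by
  have hint : IntegrableOn ν (Cube d c l) volume :=
    hνloc.integrableOn_isCompact (cube_isCompact d c l)
  rw [setIntegral_pos_iff_support_of_nonneg_ae
    (Filter.Eventually.of_forall fun x => (hνpos x).le) hint]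
  have hsupp : Function.support ν ∩ Cube d c l = Cube d c l :=
    Set.inter_eq_self_of_subset_right fun x _ => (hνpos x).ne'
  rw [hsupp, cube_volume d c hl.le]
  exact ENNReal.pow_pos (ENNReal.ofReal_pos.2 hl) d

lemma cube_vol_toReal_pos (d : ℕ) (c : Fin d → ℝ) {l : ℝ} (hl : 0 < l) :
    0 < (volume (Cube d c l)).toReal := by
  rw [cube_volume d c hl.le, ENNReal.toReal_pow, ENNReal.toReal_ofReal hl.le]
  positivity

lemma int_norm_sub_avg_le (d : ℕ) (b : (Fin d → ℝ) → ℂ) (Q : Set (Fin d → ℝ))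
    (hvol : 0 < (volume Q).toReal) (hbi : IntegrableOn b Q volume) (m : ℂ) :
    (∫ x in Q, ‖b x - avgC d b Q‖) ≤ 2 * ∫ x in Q, ‖b x - m‖ := by
  set V := (volume Q).toReal with hV
  have hμfin : volume Q ≠ ⊤ := fun h => by simp [hV, h] at hvol
  have hconst : IntegrableOn (fun _ => m) Q volume :=
    integrableOn_const hμfin
  have hbm : IntegrableOn (fun x => b x - m) Q volume := hbi.sub hconst
  have key : avgC d b Q - m = V⁻¹ • ∫ x in Q, (b x - m) := by
    rw [integral_sub hbi hconst, setIntegral_const, smul_sub, avgC]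
    rw [smul_smul]
    unfold Measure.real
    rw [← hV, inv_mul_cancel₀ hvol.ne', one_smul]
  have key2 : V * ‖avgC d b Q - m‖ ≤ ∫ x in Q, ‖b x - m‖ := by
    rw [key, norm_smul, norm_inv, Real.norm_of_nonneg hvol.le, ← mul_assoc,
      mul_inv_cancel₀ hvol.ne', one_mul]
    exact norm_integral_le_integral_norm _
  have havgint : IntegrableOn (fun _ => avgC d b Q) Q volume :=
    integrableOn_const hμfin
  calc ∫ x in Q, ‖b x - avgC d b Q‖
      ≤ ∫ x in Q, (‖b x - m‖ + ‖m - avgC d b Q‖) := by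
        apply integral_mono (hbi.sub havgint).norm
          (hbm.norm.add (integrableOn_const hμfin))
        intro x
        calc ‖b x - avgC d b Q‖ = ‖(b x - m) + (m - avgC d b Q)‖ := by ring_nf
          _ ≤ ‖b x - m‖ + ‖m - avgC d b Q‖ := norm_add_le _ _
    _ = (∫ x in Q, ‖b x - m‖) + V * ‖m - avgC d b Q‖ := by
        rw [integral_add hbm.norm (integrableOn_const hμfin),
          setIntegral_const, smul_eq_mul]
        rfl
    _ ≤ 2 * ∫ x in Q, ‖b x - m‖ := by
        rw [norm_sub_rev]
        linarith [key2]

lemma osc_compare (d : ℕ) (hd : 0 < d) (α : ℝ) (ν : (Fin d → ℝ) → ℝ)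
    (hνpos : ∀ x, 0 < ν x) (hνloc : LocallyIntegrable ν volume)
    (b : (Fin d → ℝ) → ℂ) (hb : LocallyIntegrable b volume)
    (Cd : ℝ)
    (hdbl : ∀ (c : Fin d → ℝ) (l : ℝ), 0 < l →
      (∫ x in Cube d (fun i => c i - l / 2) (2 * l), ν x) ≤ Cd * ∫ x in Cube d c l, ν x)
    (c : Fin d → ℝ) {l l' : ℝ} (hl : 0 < l) (hll' : l ≤ l') (hl32 : l' ≤ 3 * l / 2) :
    oscR d ν b α (Cube d c l) ≤
      (2 * max 1 Cd * (max 1 Cd) ^ (|α| / (d : ℝ))) * oscR d ν b α (Cube d c l') := by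
  set D := max 1 Cd with hD
  have hD1 : (1:ℝ) ≤ D := le_max_left _ _
  have hD0 : (0:ℝ) < D := lt_of_lt_of_le one_pos hD1
  set Q := Cube d c l with hQ
  set Q' := Cube d c l' with hQ'
  have hl' : 0 < l' := lt_of_lt_of_le hl hll'
  have hsub : Q ⊆ Q' := cube_subset_cube d c hll'
  have hνQ : 0 < ∫ x in Q, ν x := nu_int_pos d ν hνpos hνloc c hl
  have hνQ' : 0 < ∫ x in Q', ν x := nu_int_pos d ν hνpos hνloc c hl'
  have hνintQ' : IntegrableOn ν Q' volume := hνloc.integrableOn_isCompact (cube_isCompact d c l')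
  have hνint2 : IntegrableOn ν (Cube d (fun i => c i - l / 2) (2 * l)) volume :=
    hνloc.integrableOn_isCompact (cube_isCompact _ _ _)
  have hνnneg : ∀ s : Set (Fin d → ℝ), 0 ≤ᵐ[volume.restrict s] ν := fun s =>
    Filter.Eventually.of_forall fun x => (hνpos x).le
  have hmono : (∫ x in Q, ν x) ≤ ∫ x in Q', ν x :=
    setIntegral_mono_set hνintQ' (hνnneg _) (HasSubset.Subset.eventuallyLE hsub)
  have hdouble : (∫ x in Q', ν x) ≤ D * ∫ x in Q, ν x := by
    calc (∫ x in Q', ν x) ≤ ∫ x in Cube d (fun i => c i - l / 2) (2 * l), ν x :=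
          setIntegral_mono_set hνint2 (hνnneg _)
            (HasSubset.Subset.eventuallyLE (cube_subset_double d c hl.le hl32))
      _ ≤ Cd * ∫ x in Q, ν x := hdbl c l hl
      _ ≤ D * ∫ x in Q, ν x := by
          apply mul_le_mul_of_nonneg_right (le_max_right _ _) hνQ.le
  set e := -(α / (d : ℝ)) with he
  set K := D ^ (|α| / (d : ℝ)) with hK
  have hK1 : (1:ℝ) ≤ K := Real.one_le_rpow hD1 (by positivity)
  have A1 : (∫ x in Q, ν x) ^ e ≤ K * (∫ x in Q', ν x) ^ e := by
    rcases le_or_gt α 0 with hα | hα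
    · have he0 : 0 ≤ e := by
        rw [he]; rw [neg_nonneg]
        apply div_nonpos_of_nonpos_of_nonneg hα (by positivity)
      calc (∫ x in Q, ν x) ^ e ≤ (∫ x in Q', ν x) ^ e :=
            Real.rpow_le_rpow hνQ.le hmono he0
        _ ≤ K * (∫ x in Q', ν x) ^ e := by
            nlinarith [Real.rpow_nonneg hνQ'.le e]
    · have he0 : e ≤ 0 := by
        rw [he, neg_nonpos]
        positivity
      have hlow : (∫ x in Q', ν x) / D ≤ ∫ x in Q, ν x := by
        rw [div_le_iff₀ hD0]
        linarith [hdouble]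
      have hlowpos : 0 < (∫ x in Q', ν x) / D := by positivity
      calc (∫ x in Q, ν x) ^ e ≤ ((∫ x in Q', ν x) / D) ^ e :=
            Real.rpow_le_rpow_of_nonpos hlowpos hlow he0
        _ = (∫ x in Q', ν x) ^ e / D ^ e := Real.div_rpow hνQ'.le hD0.le e
        _ = K * (∫ x in Q', ν x) ^ e := by
            rw [hK, div_eq_mul_inv, ← Real.rpow_neg hD0.le]
            rw [mul_comm]
            congr 2
            rw [he, neg_neg, abs_of_pos hα]
  have hbiQ' : IntegrableOn b Q' volume := hb.integrableOn_isCompact (cube_isCompact d c l')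
  have hbiQ : IntegrableOn b Q volume := hbiQ'.mono_set hsub
  have hvolQ : 0 < (volume Q).toReal := cube_vol_toReal_pos d c hl
  have hμfin' : volume Q' ≠ ⊤ := by
    rw [hQ', cube_volume d c hl'.le]
    exact ENNReal.pow_ne_top ENNReal.ofReal_ne_top
  have A2 : (∫ x in Q, ‖b x - avgC d b Q‖) ≤ 2 * ∫ x in Q', ‖b x - avgC d b Q'‖ := by
    calc (∫ x in Q, ‖b x - avgC d b Q‖) ≤ 2 * ∫ x in Q, ‖b x - avgC d b Q'‖ :=
          int_norm_sub_avg_le d b Q hvolQ hbiQ _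
      _ ≤ 2 * ∫ x in Q', ‖b x - avgC d b Q'‖ := by
          apply mul_le_mul_of_nonneg_left _ (by norm_num)
          apply setIntegral_mono_set
            ((hbiQ'.sub (integrableOn_const hμfin')).norm)
            (Filter.Eventually.of_forall fun x => norm_nonneg _)
            (HasSubset.Subset.eventuallyLE hsub)
  have A3 : (1:ℝ) / (∫ x in Q, ν x) ≤ D / (∫ x in Q', ν x) := by
    rw [div_le_div_iff₀ hνQ hνQ']
    linarith [hdouble]
  have hInneg : 0 ≤ ∫ x in Q, ‖b x - avgC d b Q‖ :=
    integral_nonneg fun x => norm_nonneg _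
  have hInneg' : 0 ≤ ∫ x in Q', ‖b x - avgC d b Q'‖ :=
    integral_nonneg fun x => norm_nonneg _
  have hP : 0 ≤ (∫ x in Q, ν x) ^ e := Real.rpow_nonneg hνQ.le e
  have hP' : 0 ≤ (∫ x in Q', ν x) ^ e := Real.rpow_nonneg hνQ'.le e
  rw [oscR, oscR]
  calc ((∫ x in Q, ν x) ^ e) * ((∫ x in Q, ‖b x - avgC d b Q‖) / ∫ x in Q, ν x)
      = (((∫ x in Q, ν x) ^ e) * (∫ x in Q, ‖b x - avgC d b Q‖)) * (1 / ∫ x in Q, ν x) := by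
        ring
    _ ≤ ((K * (∫ x in Q', ν x) ^ e) * (2 * ∫ x in Q', ‖b x - avgC d b Q'‖)) *
          (D / ∫ x in Q', ν x) := by
        apply mul_le_mul (mul_le_mul A1 A2 hInneg (by positivity)) A3 (by positivity)
        positivity
    _ = (2 * D * K) * (((∫ x in Q', ν x) ^ e) *
          ((∫ x in Q', ‖b x - avgC d b Q'‖) / ∫ x in Q', ν x)) := by
        ring

theorem stmt17 (d : ℕ) (hd : 0 < d) (α : ℝ)
    (ν : (Fin d → ℝ) → ℝ) (hνpos : ∀ x, 0 < ν x) (hνloc : LocallyIntegrable ν volume)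
    (hdbl : ∃ Cd > (0 : ℝ), ∀ (c : Fin d → ℝ) (l : ℝ), 0 < l →
      (∫ x in Cube d (fun i => c i - l / 2) (2 * l), ν x) ≤ Cd * ∫ x in Cube d c l, ν x)
    (b : (Fin d → ℝ) → ℂ) (hb : LocallyIntegrable b volume)
    (hsmall : ∀ ε > (0 : ℝ), ∃ r > (0 : ℝ), ∀ (c : Fin d → ℝ) (l : ℝ), 0 < l → l ≤ r →
      oscR d ν b α (Cube d c l) ≤ ε)
    (hbig : ∀ ε > (0 : ℝ), ∃ r > (0 : ℝ), ∀ (c : Fin d → ℝ) (l : ℝ), 0 < l → r ≤ l →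
      oscR d ν b α (Cube d c l) ≤ ε)
    (htrans : ∀ (c : Fin d → ℝ) (l : ℝ), 0 < l → ∀ ε > (0 : ℝ), ∃ R > (0 : ℝ),
      ∀ x : Fin d → ℝ, R ≤ ‖x‖ → oscR d ν b α (Cube d (c + x) l) ≤ ε) :
    ∀ ε > (0 : ℝ), ∃ r > (0 : ℝ), ∀ (c : Fin d → ℝ) (l : ℝ), 0 < l →
      r < Metric.infDist (0 : Fin d → ℝ) (Cube d c l) →
      oscR d ν b α (Cube d c l) ≤ ε := by
  intro ε hε
  obtain ⟨Cd, hCd, hdbl⟩ := hdbl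
  set D := max 1 Cd with hDdef
  set C := 2 * D * D ^ (|α| / (d : ℝ)) with hCdef
  have hD1 : (1:ℝ) ≤ D := le_max_left _ _
  have hC : 0 < C := by
    have : (0:ℝ) < D := lt_of_lt_of_le one_pos hD1
    have : (0:ℝ) < D ^ (|α| / (d : ℝ)) := Real.rpow_pos_of_pos this _
    positivity
  -- small cubes
  obtain ⟨r₀, hr₀, hsm⟩ := hsmall ε hε
  -- big cubes
  obtain ⟨r₁, hr₁, hbg⟩ := hbig ε hε
  -- lengths covering the middle range: lⱼ = r₀ * (3/2)^j
  obtain ⟨N, hN⟩ : ∃ N : ℕ, r₁ ≤ r₀ * (3/2 : ℝ) ^ N := by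
    obtain ⟨N, hN⟩ := pow_unbounded_of_one_lt (r₁ / r₀) (by norm_num : (1:ℝ) < 3/2)
    exact ⟨N, by rw [div_lt_iff₀ hr₀] at hN; linarith⟩
  have hljpos : ∀ j : ℕ, 0 < r₀ * (3/2 : ℝ) ^ j := fun j => by positivity
  choose R hRpos hR using fun j : ℕ =>
    htrans 0 (r₀ * (3/2 : ℝ) ^ j) (hljpos j) (ε / C) (by positivity)
  set Rmax := (Finset.range (N + 1)).sup' (by simp) R with hRmax
  refine ⟨max Rmax 1, lt_of_lt_of_le one_pos (le_max_right _ _), ?_⟩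
  intro c l hl hdist
  have hcQ : c ∈ Cube d c l := mem_cube_self d c hl.le
  have hnormc : max Rmax 1 < ‖c‖ := by
    calc max Rmax 1 < Metric.infDist (0 : Fin d → ℝ) (Cube d c l) := hdist
      _ ≤ dist (0 : Fin d → ℝ) c := Metric.infDist_le_dist_of_mem hcQ
      _ = ‖c‖ := by rw [dist_comm, dist_zero_right]
  rcases le_or_gt l r₀ with hcase | hcase
  · exact hsm c l hl hcase
  rcases le_or_gt r₁ l with hcase2 | hcase2
  · exact hbg c l hl hcase2
  -- middle case: r₀ < l < r₁
  have hPj : ∃ j : ℕ, l ≤ r₀ * (3/2 : ℝ) ^ j := ⟨N, le_trans hcase2.le hN⟩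
  set j := Nat.find hPj with hjdef
  have hjle : l ≤ r₀ * (3/2 : ℝ) ^ j := Nat.find_spec hPj
  have hjN : j ≤ N := Nat.find_le (le_trans hcase2.le hN)
  have hjup : r₀ * (3/2 : ℝ) ^ j ≤ 3 * l / 2 := by
    rcases Nat.eq_zero_or_pos j with hj0 | hj0
    · rw [hj0]; simp; linarith
    · have := Nat.find_min hPj (Nat.sub_lt hj0 one_pos)
      push_neg at this
      have hpow : r₀ * (3/2 : ℝ) ^ j = (3/2) * (r₀ * (3/2 : ℝ) ^ (j - 1)) := by
        rw [← mul_assoc, mul_comm (3/2 : ℝ) r₀, mul_assoc, ← pow_succ']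
        congr 2
        omega
      rw [hpow]
      linarith
  set l' := r₀ * (3/2 : ℝ) ^ j with hl'def
  have hcube_eq : Cube d ((0 : Fin d → ℝ) + c) l' = Cube d c l' := by rw [zero_add]
  have hRj : oscR d ν b α (Cube d c l') ≤ ε / C := by
    rw [← hcube_eq]
    apply hR j c
    calc R j ≤ Rmax := Finset.le_sup' R (Finset.mem_range.2 (by omega))
      _ ≤ max Rmax 1 := le_max_left _ _
      _ ≤ ‖c‖ := hnormc.le
  calc oscR d ν b α (Cube d c l) ≤ C * oscR d ν b α (Cube d c l') :=
        osc_compare d hd α ν hνpos hνloc b hb Cd hdbl c hl hjle hjup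
    _ ≤ C * (ε / C) := mul_le_mul_of_nonneg_left hRj hC.le
    _ = ε := by field_simp
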